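/- arXiv:1403.8076 — 2 statements merged into one kernel-verified Lean document; each statement's English description precedes it below -/
import Mathlib

section
/- Let n ≥ 1 and let S_n(Sym_n) be the monoid presented by generators x_1,…,x_n and relations x_{σ(1)}x_{σ(2)}⋯x_{σ(n)} = x_1x_2⋯x_n for all σ ∈ Sym_n. Let u be a word in the free monoid on x_1,…,x_n that contains a subword of the form x_{σ(1)}x_{σ(2)}⋯x_{σ(n)} for some σ ∈ Sym_n. Then in S_n(Sym_n) one has u = x_1^{m_1}·x_ε·x_2^{m_2}⋯x_n^{m_n}, where x_ε = x_1x_2⋯x_n and for each i, m_i equals the number of occurrences of x_i in u minus 1 (in particular each m_i ≥ 0). -/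
/-- The word `x_{σ(1)} x_{σ(2)} ⋯ x_{σ(n)}` in the free monoid on `n` generators
(generator `x_j` is indexed by `j-1 : Fin n`). -/
def permWord {n : ℕ} (σ : Equiv.Perm (Fin n)) : FreeMonoid (Fin n) :=
  FreeMonoid.ofList (List.ofFn fun i => σ i)

/-- The word `x_ε = x_1 x_2 ⋯ x_n`. -/
def epsWord (n : ℕ) : FreeMonoid (Fin n) :=
  FreeMonoid.ofList (List.ofFn fun i : Fin n => i)

/-- The defining relations `x_{σ(1)} ⋯ x_{σ(n)} = x_1 ⋯ x_n`, `σ ∈ Sym_n`. -/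
def symRel (n : ℕ) : FreeMonoid (Fin n) → FreeMonoid (Fin n) → Prop :=
  fun a b => ∃ σ : Equiv.Perm (Fin n), a = permWord σ ∧ b = epsWord n

/-- The canonical projection from the free monoid onto `S_n(Sym_n)`. -/
def proj (n : ℕ) : FreeMonoid (Fin n) →* PresentedMonoid (symRel n) :=
  PresentedMonoid.mk (symRel n)

/-- `u` contains a subword of the form `x_{σ(1)} ⋯ x_{σ(n)}` for some `σ ∈ Sym_n`. -/
def HasPermSubword {n : ℕ} (u : FreeMonoid (Fin n)) : Prop :=
  ∃ (σ : Equiv.Perm (Fin n)) (a b : FreeMonoid (Fin n)), u = a * permWord σ * b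

/-- The word `x_1^{m_1} · x_ε · x_2^{m_2} ⋯ x_n^{m_n}` (0-indexed: `m i` is the
exponent of generator `i`). -/
def normalWord (n : ℕ) (h : 0 < n) (m : Fin n → ℕ) : FreeMonoid (Fin n) :=
  FreeMonoid.ofList (List.replicate (m ⟨0, h⟩) ⟨0, h⟩) * epsWord n *
    FreeMonoid.ofList (((List.finRange n).drop 1).flatMap fun i => List.replicate (m i) i)

-- auxiliary lemmas
theorem epsWord_eq (n : ℕ) : epsWord n = FreeMonoid.ofList (List.finRange n) := by
  simp [epsWord, ← List.ofFn_id]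
  rfl

theorem proj_sound {n : ℕ} {a b : FreeMonoid (Fin n)} (h : symRel n a b) :
    proj n a = proj n b :=
  Quotient.sound (ConGen.Rel.of a b h)

/-- any list permutation-equivalent to `finRange n` projects to `epsWord`. -/
theorem proj_of_perm_finRange {n : ℕ} {l : List (Fin n)} (h : l.Perm (List.finRange n)) :
    proj n (FreeMonoid.ofList l) = proj n (epsWord n) := by
  have hlen : l.length = n := by simpa using h.length_eq
  have hnd : l.Nodup := h.nodup_iff.mpr (List.nodup_finRange n)
  set f : Fin n → Fin n := fun k => l[(k : ℕ)]'(by omega) with hf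
  have hinj : Function.Injective f := by
    intro a b hab
    have := hnd.getElem_inj_iff.mp hab
    exact Fin.ext (by simpa using this)
  let σ : Equiv.Perm (Fin n) := Equiv.ofBijective f (Finite.injective_iff_bijective.mp hinj)
  have hword : FreeMonoid.ofList l = permWord σ := by
    unfold permWord
    congr 1
    have : List.ofFn (fun i : Fin n => σ i) = List.ofFn f := rfl
    rw [this]
    apply List.ext_getElem (by simpa using hlen)
    intro i h1 h2
    simp [hf]
  exact proj_sound ⟨σ, hword, rfl⟩

theorem eps_comm_of {n : ℕ} (i : Fin n) :
    proj n (FreeMonoid.of i) * proj n (epsWord n) = proj n (epsWord n) * proj n (FreeMonoid.of i) := by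
  have hn : 0 < n := i.pos
  set rot : List (Fin n) := (List.finRange n).rotate i.val with hrot
  have hlen : rot.length = n := by simp [hrot]
  have hhead : rot[0]'(by omega) = i := by
    simp [hrot, List.getElem_rotate, Nat.mod_eq_of_lt i.isLt]
  set s : List (Fin n) := rot.tail with hs
  have hne : rot ≠ [] := by intro h; rw [h] at hlen; simp at hlen; omega
  have hcons : rot = i :: s := by
    conv_lhs => rw [← List.cons_head_tail (l := rot) hne]
    rw [hs, ← hhead, List.getElem_zero]
  have hrot1 : (List.finRange n).rotate (i.val + 1) = s ++ [i] := by
    rw [← List.rotate_rotate, ← hrot, hcons]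
    simp [List.rotate_cons_succ]
  have h1 : proj n (FreeMonoid.ofList (i :: s)) = proj n (epsWord n) :=
    proj_of_perm_finRange (hcons ▸ List.rotate_perm _ _)
  have h2 : proj n (FreeMonoid.ofList (s ++ [i])) = proj n (epsWord n) :=
    proj_of_perm_finRange (hrot1 ▸ List.rotate_perm _ _)
  calc proj n (FreeMonoid.of i) * proj n (epsWord n)
      = proj n (FreeMonoid.of i) * proj n (FreeMonoid.ofList (s ++ [i])) := by rw [h2]
    _ = proj n (FreeMonoid.ofList (i :: s)) * proj n (FreeMonoid.of i) := by
        rw [← map_mul, ← map_mul]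
        congr 1
    _ = proj n (epsWord n) * proj n (FreeMonoid.of i) := by rw [h1]

theorem eps_comm {n : ℕ} (w : FreeMonoid (Fin n)) :
    proj n w * proj n (epsWord n) = proj n (epsWord n) * proj n w := by
  induction w using FreeMonoid.inductionOn' with
  | one => simp
  | of_mul i w ih =>
      rw [map_mul, mul_assoc, ih, ← mul_assoc, eps_comm_of, mul_assoc]

theorem eps_swap {n : ℕ} (i j : Fin n) :
    proj n (epsWord n) * proj n (FreeMonoid.of i) * proj n (FreeMonoid.of j) =
    proj n (epsWord n) * proj n (FreeMonoid.of j) * proj n (FreeMonoid.of i) := by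
  rcases eq_or_ne i j with rfl | hij
  · rfl
  set r : List (Fin n) := ((List.finRange n).erase i).erase j with hr
  have h1 : (i :: j :: r).Perm (List.finRange n) := by
    have p1 : (List.finRange n).Perm (i :: (List.finRange n).erase i) :=
      List.perm_cons_erase (List.mem_finRange i)
    have hj : j ∈ (List.finRange n).erase i :=
      (List.mem_erase_of_ne hij.symm).mpr (List.mem_finRange j)
    have p2 : ((List.finRange n).erase i).Perm (j :: r) := List.perm_cons_erase hj
    exact ((p1.trans (p2.cons i))).symm
  have h2 : (r ++ [j, i]).Perm (List.finRange n) := by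
    refine (List.perm_append_comm.trans ?_)
    have : ([j, i] ++ r).Perm (i :: j :: r) := by
      simpa using (List.Perm.swap i j r)
    exact this.trans h1
  have e1 : proj n (FreeMonoid.ofList (i :: j :: r)) = proj n (epsWord n) :=
    proj_of_perm_finRange h1
  have e2 : proj n (FreeMonoid.ofList (r ++ [j, i])) = proj n (epsWord n) :=
    proj_of_perm_finRange h2
  calc proj n (epsWord n) * proj n (FreeMonoid.of i) * proj n (FreeMonoid.of j)
      = proj n (FreeMonoid.of i) * proj n (FreeMonoid.of j) * proj n (epsWord n) := by
        rw [mul_assoc, ← map_mul, eps_comm]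
    _ = proj n (FreeMonoid.of i) * proj n (FreeMonoid.of j) *
          proj n (FreeMonoid.ofList (r ++ [j, i])) := by rw [e2]
    _ = proj n (FreeMonoid.ofList (i :: j :: r)) * proj n (FreeMonoid.of j) *
          proj n (FreeMonoid.of i) := by
        rw [← map_mul, ← map_mul, ← map_mul, ← map_mul]
        congr 1
        apply FreeMonoid.toList.injective
        simp [FreeMonoid.toList_mul, FreeMonoid.toList_ofList, FreeMonoid.toList_of]
    _ = proj n (epsWord n) * proj n (FreeMonoid.of j) * proj n (FreeMonoid.of i) := by rw [e1]

theorem eps_mul_perm {n : ℕ} {l₁ l₂ : List (Fin n)} (h : l₁.Perm l₂) :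
    proj n (epsWord n) * proj n (FreeMonoid.ofList l₁) =
    proj n (epsWord n) * proj n (FreeMonoid.ofList l₂) := by
  induction h with
  | nil => rfl
  | cons a h ih =>
      have : ∀ t : List (Fin n), proj n (FreeMonoid.ofList (a :: t)) =
          proj n (FreeMonoid.of a) * proj n (FreeMonoid.ofList t) := fun t => rfl
      rw [this, this, ← mul_assoc, ← mul_assoc]
      rw [show proj n (epsWord n) * proj n (FreeMonoid.of a)
            = proj n (FreeMonoid.of a) * proj n (epsWord n) from (eps_comm _).symm]
      rw [mul_assoc, mul_assoc, ih]
  | swap x y l =>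
      have hc : ∀ (a b : Fin n) (t : List (Fin n)), proj n (FreeMonoid.ofList (a :: b :: t)) =
          proj n (FreeMonoid.of a) * proj n (FreeMonoid.of b) * proj n (FreeMonoid.ofList t) := by
        intro a b t
        rw [← map_mul, ← map_mul]; rfl
      rw [hc, hc, ← mul_assoc, ← mul_assoc, ← mul_assoc, ← mul_assoc, eps_swap]
  | trans _ _ ih1 ih2 => rw [ih1, ih2]

theorem sum_map_ite {n : ℕ} {l : List (Fin n)} (hl : l.Nodup) (i : Fin n) (m : Fin n → ℕ) :
    (l.map fun j => if j = i then m j else 0).sum = if i ∈ l then m i else 0 := by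
  induction l with
  | nil => simp
  | cons a t ih =>
      rcases List.nodup_cons.mp hl with ⟨ha, ht⟩
      rcases eq_or_ne a i with rfl | hne
      · simp [ih ht, ha]
      · simp [hne, ih ht, Ne.symm hne]

theorem drop_one_finRange_mem {n : ℕ} (hn : 0 < n) (i : Fin n) :
    i ∈ (List.finRange n).drop 1 ↔ i ≠ ⟨0, hn⟩ := by
  have hne : List.finRange n ≠ [] := by
    intro h
    have := List.length_finRange (n := n)
    rw [h] at this; simp at this; omega
  have hhead : (List.finRange n).head hne = ⟨0, hn⟩ := by
    rw [← List.getElem_zero (by simp; omega)]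
    simp
  have hcons : List.finRange n = ⟨0, hn⟩ :: (List.finRange n).drop 1 := by
    rw [List.drop_one, ← hhead, List.cons_head_tail]
  have hnd := List.nodup_finRange n
  rw [hcons] at hnd
  rcases List.nodup_cons.mp hnd with ⟨h0, _⟩
  constructor
  · intro hi h; exact h0 (h ▸ hi)
  · intro hi
    have := List.mem_finRange i
    rw [hcons] at this
    rcases List.mem_cons.mp this with h | h
    · exact absurd h hi
    · exact h

theorem count_drop_flatMap {n : ℕ} (hn : 0 < n) (i : Fin n) (m : Fin n → ℕ) :
    (((List.finRange n).drop 1).flatMap fun j => List.replicate (m j) j).count i =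
      if i = (⟨0, hn⟩ : Fin n) then 0 else m i := by
  rw [List.count_flatMap]
  have hnd : ((List.finRange n).drop 1).Nodup :=
    List.Nodup.sublist (List.drop_sublist 1 _) (List.nodup_finRange n)
  have : (fun j => (List.replicate (m j) j).count i)
      = fun j => if j = i then m j else 0 := by
    funext j
    rw [List.count_replicate]
    by_cases h : j = i <;> simp [h]
  rw [show (List.count i ∘ fun j => List.replicate (m j) j)
      = fun j => if j = i then m j else 0 from this]
  rw [sum_map_ite hnd i m]
  rcases eq_or_ne i (⟨0, hn⟩ : Fin n) with rfl | hne
  · have hmem : (⟨0, hn⟩ : Fin n) ∉ (List.finRange n).drop 1 := by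
      rw [drop_one_finRange_mem hn]; simp
    rw [if_neg hmem, if_pos rfl]
  · have hmem := (drop_one_finRange_mem hn i).mpr hne
    rw [if_pos hmem, if_neg hne]

/-- If a word `u` contains a subword `x_{σ(1)}⋯x_{σ(n)}` for some `σ ∈ Sym_n`, then every
generator occurs in `u` at least once, and in `S_n(Sym_n)` one has
`u = x_1^{m_1} · x_ε · x_2^{m_2} ⋯ x_n^{m_n}` where `m_i` is the number of occurrences
of `x_i` in `u` minus 1. -/
theorem eq_normalWord_of_hasPermSubword (n : ℕ) (hn : 1 ≤ n) (u : FreeMonoid (Fin n))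
    (hu : HasPermSubword u) :
    (∀ i : Fin n, 1 ≤ (FreeMonoid.toList u).count i) ∧
    proj n u =
      proj n (normalWord n hn (fun i => (FreeMonoid.toList u).count i - 1)) := by
  obtain ⟨σ, a, b, rfl⟩ := hu
  have hofn : List.map σ (List.finRange n) = List.ofFn fun k => σ k := by
    rw [← List.ofFn_id, List.map_ofFn]; rfl
  have hperm : (List.ofFn fun k => σ k).Perm (List.finRange n) := by
    rw [← hofn]; exact σ.map_finRange_perm
  have count1 : ∀ i : Fin n, (List.ofFn fun k => σ k).count i = 1 := by
    intro i
    rw [hperm.count_eq]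
    exact List.count_eq_one_of_mem (List.nodup_finRange n) (List.mem_finRange i)
  have htl : FreeMonoid.toList (a * permWord σ * b)
      = FreeMonoid.toList a ++ (List.ofFn fun k => σ k) ++ FreeMonoid.toList b := rfl
  have hcount : ∀ i : Fin n, (FreeMonoid.toList (a * permWord σ * b)).count i
      = (FreeMonoid.toList a).count i + 1 + (FreeMonoid.toList b).count i := by
    intro i
    rw [htl, List.count_append, List.count_append, count1]
  refine ⟨fun i => by rw [hcount]; omega, ?_⟩
  set m : Fin n → ℕ := fun i => (FreeMonoid.toList (a * permWord σ * b)).count i - 1 with hm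
  have hm' : ∀ i, m i = (FreeMonoid.toList a).count i + (FreeMonoid.toList b).count i := by
    intro i; rw [hm]; simp only; rw [hcount]; omega
  set rep0 : List (Fin n) := List.replicate (m ⟨0, hn⟩) ⟨0, hn⟩ with hrep0
  set rest : List (Fin n) :=
    ((List.finRange n).drop 1).flatMap fun i => List.replicate (m i) i with hrest
  have hp : (FreeMonoid.toList a ++ FreeMonoid.toList b).Perm (rep0 ++ rest) := by
    rw [List.perm_iff_count]
    intro i
    rw [List.count_append, List.count_append, hrep0, List.count_replicate,
      hrest, count_drop_flatMap hn i m]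
    rcases eq_or_ne i (⟨0, hn⟩ : Fin n) with rfl | hne
    · simp [hm' _]
    · simp only [beq_iff_eq, if_neg (Ne.symm hne), if_neg hne, hm' i]
      omega
  have e0 : proj n (permWord σ) = proj n (epsWord n) := proj_sound ⟨σ, rfl, rfl⟩
  have key := eps_mul_perm (n := n) hp
  calc proj n (a * permWord σ * b)
      = proj n a * proj n (epsWord n) * proj n b := by rw [map_mul, map_mul, e0]
    _ = proj n (epsWord n) * (proj n a * proj n b) := by
        rw [eps_comm, mul_assoc]
    _ = proj n (epsWord n) * proj n (FreeMonoid.ofList (FreeMonoid.toList a ++ FreeMonoid.toList b)) := by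
        rw [← map_mul]; rfl
    _ = proj n (epsWord n) * proj n (FreeMonoid.ofList (rep0 ++ rest)) := key
    _ = proj n (normalWord n hn m) := by
        unfold normalWord
        rw [FreeMonoid.ofList_append, map_mul, map_mul, map_mul, ← hrep0, ← hrest,
          eps_comm, ← mul_assoc]
end

section
/- Let n ≥ 2, let k be a field, let k⟨X⟩ be the free associative algebra over k on x_1,…,x_n, and let I be the two-sided ideal generated by { x_{σ(1)}⋯x_{σ(n)} − x_1⋯x_n : σ ∈ Sym_n }. Then for every m ≥ 1 and all indices 2 ≤ i_1,…,i_m ≤ n, the element x_ε·x_{i_1}x_{i_2}⋯x_{i_m}·x_1 − x_1·x_ε·x_{i_1}x_{i_2}⋯x_{i_m} belongs to I, where x_ε = x_1x_2⋯x_n. -/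
/-- The monomial of `k⟨X⟩` corresponding to a word `w` in the generators. -/
noncomputable def wordElem (k : Type) [Field k] {n : ℕ} (w : List (Fin n)) :
    FreeAlgebra k (Fin n) :=
  (w.map (FreeAlgebra.ι k)).prod

/-- The monomial `x_ε = x_1 x_2 ⋯ x_n` of `k⟨X⟩`. -/
noncomputable def epsElem (k : Type) [Field k] (n : ℕ) : FreeAlgebra k (Fin n) :=
  wordElem k (List.ofFn fun i : Fin n => i)

/-- The set `{ x_{σ(1)} ⋯ x_{σ(n)} − x_1 ⋯ x_n : σ ∈ Sym_n }`. -/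
noncomputable def relSet (k : Type) [Field k] (n : ℕ) : Set (FreeAlgebra k (Fin n)) :=
  { p | ∃ σ : Equiv.Perm (Fin n),
      p = wordElem k (List.ofFn fun i => σ i) - epsElem k n }

lemma wordElem_nil (k : Type) [Field k] {n : ℕ} : wordElem k ([] : List (Fin n)) = 1 := rfl

lemma wordElem_append (k : Type) [Field k] {n : ℕ} (a b : List (Fin n)) :
    wordElem k (a ++ b) = wordElem k a * wordElem k b := by
  simp [wordElem]

lemma wordElem_cons (k : Type) [Field k] {n : ℕ} (a : Fin n) (b : List (Fin n)) :
    wordElem k (a :: b) = FreeAlgebra.ι k a * wordElem k b := by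
  simp [wordElem]

lemma eps_eq (k : Type) [Field k] (n : ℕ) : epsElem k n = wordElem k (List.finRange n) := by
  simp [epsElem, List.finRange]

lemma perm_word_mem (k : Type) [Field k] {n : ℕ} (w : List (Fin n))
    (hw : w.Perm (List.finRange n)) :
    wordElem k w - epsElem k n ∈ TwoSidedIdeal.span (relSet k n) := by
  have hlen : w.length = n := by simpa using hw.length_eq
  have hnd : w.Nodup := hw.nodup_iff.mpr (List.nodup_finRange n)
  have hinj : Function.Injective (fun i : Fin n => w.get (Fin.cast hlen.symm i)) := by
    intro a b hab
    have := List.nodup_iff_injective_get.mp hnd hab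
    simpa [Fin.ext_iff] using this
  let σ : Equiv.Perm (Fin n) := Equiv.ofBijective _ (Finite.injective_iff_bijective.mp hinj)
  have hofn : (List.ofFn fun i => σ i) = w := by
    apply List.ext_get (by simp [hlen])
    intro i h1 h2
    simp [σ, Equiv.ofBijective, List.get_ofFn]
  apply TwoSidedIdeal.subset_span
  exact ⟨σ, by rw [hofn]⟩

section Aux

variable (m : ℕ) (k : Type) [Field k]

local notation "n" => m + 2
local notation "x" a => FreeAlgebra.ι k a
local notation "I" => TwoSidedIdeal.span (relSet k (m+2))

abbrev Tl (m : ℕ) : List (Fin (m+2)) := (List.finRange (m+1)).map Fin.succ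

lemma finRange_eq : List.finRange (m+2) = (0 : Fin (m+2)) :: Tl m :=
  List.finRange_succ

lemma mem_Tl {i : Fin (m+2)} (hi : i ≠ 0) : i ∈ Tl m := by
  have : i ∈ List.finRange (m+2) := List.mem_finRange i
  rw [finRange_eq] at this
  rcases List.mem_cons.mp this with h | h
  · exact absurd h hi
  · exact h

lemma eps_split : epsElem k (m+2) = (x (0 : Fin (m+2))) * wordElem k (Tl m) := by
  rw [eps_eq, finRange_eq, wordElem_cons]

/-- Lemma E : x_ε x₀ − x₀ x_ε ∈ I -/
lemma lemE : epsElem k (m+2) * (x (0 : Fin (m+2))) - (x (0 : Fin (m+2))) * epsElem k (m+2) ∈ I := by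
  have hperm : (Tl m ++ [(0 : Fin (m+2))]).Perm (List.finRange (m+2)) := by
    rw [finRange_eq]; exact List.perm_append_singleton 0 (Tl m)
  have hm := TwoSidedIdeal.mul_mem_left I (x (0:Fin (m+2)))
    (wordElem k (Tl m ++ [(0:Fin (m+2))]) - epsElem k (m+2)) (perm_word_mem k _ hperm)
  have heq : epsElem k (m+2) * (x (0 : Fin (m+2))) - (x (0 : Fin (m+2))) * epsElem k (m+2)
      = (x (0:Fin (m+2))) * (wordElem k (Tl m ++ [(0:Fin (m+2))]) - epsElem k (m+2)) := by
    rw [mul_sub, eps_split, wordElem_append]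
    simp [wordElem_cons, wordElem_nil, mul_assoc]
  rw [heq]; exact hm

/-- Lemma C : x_ε x_i − x_i x_ε ∈ I for i ≠ 0 -/
lemma lemC {i : Fin (m+2)} (hi : i ≠ 0) :
    epsElem k (m+2) * (x i) - (x i) * epsElem k (m+2) ∈ I := by
  set R : List (Fin (m+2)) := (List.finRange (m+2)).erase i with hR
  have hiF : i ∈ List.finRange (m+2) := List.mem_finRange i
  have h1 : (i :: R).Perm (List.finRange (m+2)) := (List.perm_cons_erase hiF).symm
  have h2 : (R ++ [i]).Perm (List.finRange (m+2)) :=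
    (List.perm_append_singleton i R).trans h1
  have m1 : (epsElem k (m+2) - wordElem k (i :: R)) * (x i) ∈ I := by
    refine TwoSidedIdeal.mul_mem_right I _ _ ?_
    have := (TwoSidedIdeal.span (relSet k (m+2))).neg_mem (perm_word_mem k _ h1)
    simpa using this
  have m2 : (x i) * (wordElem k (R ++ [i]) - epsElem k (m+2)) ∈ I :=
    TwoSidedIdeal.mul_mem_left I _ _ (perm_word_mem k _ h2)
  have key : wordElem k (i :: R) * (x i) = (x i) * wordElem k (R ++ [i]) := by
    simp [wordElem_cons, wordElem_append, wordElem_nil, mul_assoc]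
  have heq : epsElem k (m+2) * (x i) - (x i) * epsElem k (m+2)
      = (epsElem k (m+2) - wordElem k (i :: R)) * (x i)
        + (x i) * (wordElem k (R ++ [i]) - epsElem k (m+2)) := by
    rw [sub_mul, mul_sub, key]; abel
  rw [heq]; exact TwoSidedIdeal.add_mem _ m1 m2

/-- Lemma D : x_i x₀ x_ε − x₀ x_ε x_i ∈ I for i ≠ 0 -/
lemma lemD {i : Fin (m+2)} (hi : i ≠ 0) :
    (x i) * (x (0:Fin (m+2))) * epsElem k (m+2)
      - (x (0:Fin (m+2))) * epsElem k (m+2) * (x i) ∈ I := by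
  set z : Fin (m+2) := 0 with hz
  set E : List (Fin (m+2)) := (Tl m).erase i with hE
  have hiT : i ∈ Tl m := mem_Tl m hi
  have hT : (Tl m).Perm (i :: E) := List.perm_cons_erase hiT
  have hF0 : (List.finRange (m+2)).Perm (z :: i :: E) := by
    rw [finRange_eq]; exact hT.cons z
  have hA : (i :: z :: E).Perm (List.finRange (m+2)) :=
    ((List.Perm.swap z i E)).trans hF0.symm
  have hB : (E ++ [z, i]).Perm (List.finRange (m+2)) :=
    (List.perm_append_comm).trans hF0.symm
  have hP : (Tl m ++ [z]).Perm (List.finRange (m+2)) := by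
    rw [finRange_eq]; exact List.perm_append_singleton z (Tl m)
  set A := wordElem k (i :: z :: E) with hAdef
  set B := wordElem k (E ++ [z, i]) with hBdef
  set P := wordElem k (Tl m ++ [z]) with hPdef
  set e := epsElem k (m+2) with he
  have m1 : (x i) * (x z) * (e - B) ∈ I := by
    refine TwoSidedIdeal.mul_mem_left I _ _ ?_
    have := (TwoSidedIdeal.span (relSet k (m+2))).neg_mem (perm_word_mem k _ hB)
    simpa [← he] using this
  have m2 : (A - e) * ((x z) * (x i)) ∈ I :=
    TwoSidedIdeal.mul_mem_right I _ _ (perm_word_mem k _ hA)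
  have m3 : (x z) * ((P - e) * (x i)) ∈ I :=
    TwoSidedIdeal.mul_mem_left I _ _ (TwoSidedIdeal.mul_mem_right I _ _ (perm_word_mem k _ hP))
  have e1 : (x i) * (x z) * B = A * ((x z) * (x i)) := by
    rw [hAdef, hBdef]
    simp [wordElem_cons, wordElem_append, wordElem_nil, mul_assoc]
  have e2 : e * ((x z) * (x i)) = (x z) * (P * (x i)) := by
    rw [he, hPdef, eps_split, wordElem_append]
    simp [wordElem_cons, wordElem_nil, mul_assoc, hz]
  have heq : (x i) * (x z) * e - (x z) * e * (x i)
      = (x i) * (x z) * (e - B) + (A - e) * ((x z) * (x i)) + (x z) * ((P - e) * (x i)) := by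
    rw [mul_sub, sub_mul, sub_mul, mul_sub, e1, ← e2,
      ← mul_assoc (x z) e (x i)]
    abel
  rw [heq]
  exact TwoSidedIdeal.add_mem _ (TwoSidedIdeal.add_mem _ m1 m2) m3

lemma auxMain (l : List (Fin (m+2))) (hl : ∀ a ∈ l, a ≠ 0) :
    epsElem k (m+2) * wordElem k l * (x (0:Fin (m+2)))
      - (x (0:Fin (m+2))) * epsElem k (m+2) * wordElem k l ∈ I := by
  induction l with
  | nil =>
    simpa [wordElem_nil] using lemE m k
  | cons i w ih =>
    have hi : i ≠ 0 := hl i List.mem_cons_self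
    have ihw := ih (fun a ha => hl a (List.mem_cons_of_mem i ha))
    set z : Fin (m+2) := 0 with hz
    set e := epsElem k (m+2) with he
    set W := wordElem k w with hW
    have m1 : (e * (x i) - (x i) * e) * (W * (x z)) ∈ I :=
      TwoSidedIdeal.mul_mem_right I _ _ (lemC m k hi)
    have m2 : (x i) * (e * W * (x z) - (x z) * e * W) ∈ I :=
      TwoSidedIdeal.mul_mem_left I _ _ ihw
    have m3 : ((x i) * (x z) * e - (x z) * e * (x i)) * W ∈ I :=
      TwoSidedIdeal.mul_mem_right I _ _ (lemD m k hi)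
    have heq : e * wordElem k (i :: w) * (x z) - (x z) * e * wordElem k (i :: w)
        = (e * (x i) - (x i) * e) * (W * (x z))
          + (x i) * (e * W * (x z) - (x z) * e * W)
          + ((x i) * (x z) * e - (x z) * e * (x i)) * W := by
      rw [wordElem_cons, ← hW]
      simp only [mul_sub, sub_mul, mul_assoc]
      abel
    rw [heq]
    exact TwoSidedIdeal.add_mem _ (TwoSidedIdeal.add_mem _ m1 m2) m3

end Aux

/-- For every `m ≥ 1` and indices `i_1, …, i_m` with `2 ≤ i_t ≤ n` (0-indexed: values ≠ 0),
the element `x_ε·x_{i_1}⋯x_{i_m}·x_1 − x_1·x_ε·x_{i_1}⋯x_{i_m}` lies in the two-sided ideal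
generated by the permutation relations. -/
theorem eps_x1_mem_span (n : ℕ) (hn : 2 ≤ n) (k : Type) [Field k]
    (l : List (Fin n)) (hlen : 1 ≤ l.length) (hl : ∀ a ∈ l, a.val ≠ 0) :
    epsElem k n * wordElem k l * FreeAlgebra.ι k (⟨0, by omega⟩ : Fin n) -
        FreeAlgebra.ι k (⟨0, by omega⟩ : Fin n) * epsElem k n * wordElem k l ∈
      TwoSidedIdeal.span (relSet k n) := by
  obtain ⟨m, rfl⟩ : ∃ m, n = m + 2 := ⟨n - 2, by omega⟩
  have h0 : (⟨0, by omega⟩ : Fin (m+2)) = 0 := by ext; simp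
  rw [h0]
  exact auxMain m k l (fun a ha => by
    have := hl a ha
    exact fun h => this (by simp [h]))
end
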